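/- For positive definite Hermitian matrices A, B, the Thompson metric satisfies d_T(A,B) = ‖log(B^{-1/2} A B^{-1/2})‖, where ‖·‖ denotes the maximum absolute value of the eigenvalues (operator norm of the Hermitian matrix). -/

import Mathlib

open scoped ComplexOrder

/-- `Mmat A B = inf {t > 0 : t • B - A` positive definite `}`. -/
noncomputable def Mmat {n : ℕ} (A B : Matrix (Fin n) (Fin n) ℂ) : ℝ :=
  sInf {t : ℝ | 0 < t ∧ (t • B - A).PosDef}

/-- The Thompson metric `d_T(A,B) = log max(M(A,B), M(B,A))`. -/
noncomputable def dThompson {n : ℕ} (A B : Matrix (Fin n) (Fin n) ℂ) : ℝ :=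
  Real.log (max (Mmat A B) (Mmat B A))

/-- The positive semidefinite square root of a positive semidefinite matrix
(Mathlib's former `Matrix.PosSemidef.sqrt`, removed since; restored with its old value). -/
noncomputable def Matrix.PosSemidef.sqrt {𝕜 : Type*} [RCLike 𝕜] {n : Type*} [Fintype n]
    [DecidableEq n] {A : Matrix n n 𝕜} (hA : A.PosSemidef) : Matrix n n 𝕜 :=
  hA.1.eigenvectorUnitary.1 * Matrix.diagonal ((↑) ∘ (√·) ∘ hA.1.eigenvalues) *
    (star hA.1.eigenvectorUnitary : Matrix n n 𝕜)

section Aux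

open Matrix

variable {n : ℕ}

lemma posDef_conj_isUnit {M N : Matrix (Fin n) (Fin n) ℂ} (hM : M.PosDef)
    (hN : IsUnit N.det) : (Nᴴ * M * N).PosDef := by
  refine Matrix.PosDef.of_dotProduct_mulVec_pos (Matrix.isHermitian_conjTranspose_mul_mul N hM.1) fun x hx => ?_
  have hNx : N *ᵥ x ≠ 0 := by
    intro h
    have hinj : Function.Injective N.mulVec :=
      have := N.invertibleOfIsUnitDet hN
      Matrix.mulVec_injective_of_invertible N
    exact hx (hinj (by simpa using h))
  simpa only [star_mulVec, dotProduct_mulVec, vecMul_vecMul] using hM.dotProduct_mulVec_pos hNx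

lemma posDef_of_posSemidef_det_ne_zero {M : Matrix (Fin n) (Fin n) ℂ}
    (hM : M.PosSemidef) (h : M.det ≠ 0) : M.PosDef := by
  refine Matrix.PosDef.of_dotProduct_mulVec_pos hM.1 fun x hx => lt_of_le_of_ne ((posSemidef_iff_dotProduct_mulVec.mp hM).2 x) fun h0 => ?_
  have : M *ᵥ x = 0 := (hM.dotProduct_mulVec_zero_iff x).mp h0.symm
  have hinj : Function.Injective M.mulVec :=
    have := M.invertibleOfIsUnitDet (isUnit_iff_ne_zero.mpr h)
    Matrix.mulVec_injective_of_invertible M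
  exact hx (hinj (by simpa using this))

lemma smul_add_smul_one_eq {C : Matrix (Fin n) (Fin n) ℂ} (hC : C.IsHermitian) (a b : ℝ) :
    a • C + b • (1 : Matrix (Fin n) (Fin n) ℂ) =
      (hC.eigenvectorUnitary : Matrix (Fin n) (Fin n) ℂ) *
        diagonal (fun i => ((a * hC.eigenvalues i + b : ℝ) : ℂ)) *
        (star (hC.eigenvectorUnitary : Matrix (Fin n) (Fin n) ℂ)) := by
  have hU : (hC.eigenvectorUnitary : Matrix (Fin n) (Fin n) ℂ) *
      (star (hC.eigenvectorUnitary : Matrix (Fin n) (Fin n) ℂ)) = 1 :=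
    (Matrix.mem_unitaryGroup_iff).mp hC.eigenvectorUnitary.2
  have hdiag : diagonal (fun i => ((a * hC.eigenvalues i + b : ℝ) : ℂ)) =
      a • diagonal (RCLike.ofReal ∘ hC.eigenvalues) + b • (1 : Matrix (Fin n) (Fin n) ℂ) := by
    ext i j
    by_cases h : i = j
    · subst h
      simp [diagonal_apply_eq, Matrix.one_apply_eq, Complex.real_smul]
    · simp [diagonal_apply_ne _ h, Matrix.one_apply_ne h]
  rw [hdiag, Matrix.mul_add, Matrix.add_mul, Matrix.mul_smul, Matrix.smul_mul,
    Matrix.mul_smul, Matrix.smul_mul, Matrix.mul_one, hU, ← Unitary.conjStarAlgAut_apply (S := ℂ), ← hC.spectral_theorem]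

lemma posDef_smul_add_smul_one_iff {C : Matrix (Fin n) (Fin n) ℂ} (hC : C.IsHermitian)
    (a b : ℝ) :
    (a • C + b • (1 : Matrix (Fin n) (Fin n) ℂ)).PosDef ↔
      ∀ i, 0 < a * hC.eigenvalues i + b := by
  set U : Matrix (Fin n) (Fin n) ℂ := ↑hC.eigenvectorUnitary with hUdef
  have hU1 : U * Uᴴ = 1 := by
    rw [← Matrix.star_eq_conjTranspose]
    exact Matrix.mem_unitaryGroup_iff.mp hC.eigenvectorUnitary.2
  have hU2 : Uᴴ * U = 1 := by
    rw [← Matrix.star_eq_conjTranspose]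
    exact Matrix.mem_unitaryGroup_iff'.mp hC.eigenvectorUnitary.2
  set D := diagonal (fun i => ((a * hC.eigenvalues i + b : ℝ) : ℂ)) with hDdef
  have hDiff : D.PosDef ↔ ∀ i, 0 < a * hC.eigenvalues i + b := by
    rw [hDdef, Matrix.posDef_diagonal_iff]
    constructor <;> intro h i <;> have := h i
    · exact_mod_cast Complex.zero_lt_real.mp this
    · exact Complex.zero_lt_real.mpr this
  rw [smul_add_smul_one_eq hC a b, ← hUdef, Matrix.star_eq_conjTranspose, ← hDdef]
  constructor
  · intro h
    have h2 := posDef_conj_isUnit h (Matrix.isUnit_det_of_right_inverse hU1)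
    have he : Uᴴ * (U * D * Uᴴ) * U = D := by
      rw [Matrix.mul_assoc, Matrix.mul_assoc, Matrix.mul_assoc, hU2, Matrix.mul_one,
        ← Matrix.mul_assoc, hU2, Matrix.one_mul]
    rw [he] at h2
    exact hDiff.mp h2
  · intro h
    have hD : D.PosDef := hDiff.mpr h
    have h2 := posDef_conj_isUnit hD (Matrix.isUnit_det_of_right_inverse hU2)
    rwa [Matrix.conjTranspose_conjTranspose] at h2

lemma posDef_conj_inv_iff {S : Matrix (Fin n) (Fin n) ℂ} (hS : S.PosDef)
    (X : Matrix (Fin n) (Fin n) ℂ) : (S⁻¹ * X * S⁻¹).PosDef ↔ X.PosDef := by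
  have hdet : IsUnit S.det := isUnit_iff_ne_zero.mpr hS.det_pos.ne'
  have hSH : Sᴴ = S := hS.1
  have hSiH : (S⁻¹)ᴴ = S⁻¹ := by rw [Matrix.conjTranspose_nonsing_inv, hSH]
  constructor
  · intro h
    have h2 := posDef_conj_isUnit h hdet
    rw [hSH] at h2
    have he : S * (S⁻¹ * X * S⁻¹) * S = X := by
      rw [Matrix.mul_assoc, Matrix.mul_assoc, Matrix.mul_assoc,
        Matrix.nonsing_inv_mul S hdet, Matrix.mul_one, ← Matrix.mul_assoc,
        Matrix.mul_nonsing_inv S hdet, Matrix.one_mul]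
    rwa [he] at h2
  · intro h
    have h2 := posDef_conj_isUnit h (Matrix.isUnit_nonsing_inv_det S hdet)
    rwa [hSiH] at h2

end Aux

set_option maxHeartbeats 1000000 in
/-- For positive definite Hermitian matrices `A, B`, the Thompson metric equals
`‖log (B^{-1/2} A B^{-1/2})‖`, the maximum of the absolute values of the logarithms
of the eigenvalues of `B^{-1/2} A B^{-1/2}`. -/
theorem dThompson_eq_spectral_norm_log {n : ℕ} (hn : 0 < n)
    (A B : Matrix (Fin n) (Fin n) ℂ) (hA : A.PosDef) (hB : B.PosDef)
    (hT : (hB.posSemidef.sqrt⁻¹ * A * hB.posSemidef.sqrt⁻¹).IsHermitian) :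
    dThompson A B = ⨆ i, |Real.log (hT.eigenvalues i)| := by
  classical
  have hne : Nonempty (Fin n) := ⟨⟨0, hn⟩⟩
  set S := hB.posSemidef.sqrt with hSdef
  set C := S⁻¹ * A * S⁻¹ with hCdef
  have hSps : S.PosSemidef := by
    rw [hSdef]
    unfold Matrix.PosSemidef.sqrt
    have hD : (Matrix.diagonal ((↑) ∘ (√·) ∘ hB.posSemidef.1.eigenvalues) :
        Matrix (Fin n) (Fin n) ℂ).PosSemidef :=
      Matrix.posSemidef_diagonal_iff.mpr fun i => by simp [Real.sqrt_nonneg]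
    have := hD.mul_mul_conjTranspose_same (hB.posSemidef.1.eigenvectorUnitary.1)
    rwa [← Matrix.star_eq_conjTranspose] at this
  have hSS : S * S = B := by
    rw [hSdef]
    unfold Matrix.PosSemidef.sqrt
    have hU2 : star (hB.posSemidef.1.eigenvectorUnitary : Matrix (Fin n) (Fin n) ℂ) *
        (hB.posSemidef.1.eigenvectorUnitary : Matrix (Fin n) (Fin n) ℂ) = 1 :=
      Matrix.mem_unitaryGroup_iff'.mp hB.posSemidef.1.eigenvectorUnitary.2
    calc _ = (hB.posSemidef.1.eigenvectorUnitary : Matrix (Fin n) (Fin n) ℂ) *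
          (Matrix.diagonal ((↑) ∘ (√·) ∘ hB.posSemidef.1.eigenvalues) *
            (star (hB.posSemidef.1.eigenvectorUnitary : Matrix (Fin n) (Fin n) ℂ) *
              (hB.posSemidef.1.eigenvectorUnitary : Matrix (Fin n) (Fin n) ℂ)) *
            Matrix.diagonal ((↑) ∘ (√·) ∘ hB.posSemidef.1.eigenvalues)) *
          star (hB.posSemidef.1.eigenvectorUnitary : Matrix (Fin n) (Fin n) ℂ) := by
          simp only [Matrix.mul_assoc]
          rfl
      _ = (hB.posSemidef.1.eigenvectorUnitary : Matrix (Fin n) (Fin n) ℂ) *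
          Matrix.diagonal (RCLike.ofReal ∘ hB.posSemidef.1.eigenvalues) *
          star (hB.posSemidef.1.eigenvectorUnitary : Matrix (Fin n) (Fin n) ℂ) := by
          rw [hU2, Matrix.mul_one, Matrix.diagonal_mul_diagonal]
          congr 2
          apply congrArg Matrix.diagonal
          funext i
          change ((√(_) : ℝ) : ℂ) * ((√(_) : ℝ) : ℂ) = ((_ : ℝ) : ℂ)
          rw [← Complex.ofReal_mul, Real.mul_self_sqrt (hB.posSemidef.eigenvalues_nonneg i)]
          rfl
      _ = B := by
          rw [← Unitary.conjStarAlgAut_apply (S := ℂ), ← hB.posSemidef.1.spectral_theorem]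
  have hSdet : S.det ≠ 0 := by
    intro h
    have : B.det = 0 := by rw [← hSS, Matrix.det_mul, h, mul_zero]
    exact hB.det_pos.ne' this
  have hS : S.PosDef := posDef_of_posSemidef_det_ne_zero hSps hSdet
  have hdetU : IsUnit S.det := isUnit_iff_ne_zero.mpr hSdet
  have hC : C.PosDef := (posDef_conj_inv_iff hS A).mpr hA
  set μ : Fin n → ℝ := hT.eigenvalues with hμdef
  have hμpos : ∀ i, 0 < μ i := fun i => hC.eigenvalues_pos i
  have hBid : S⁻¹ * B * S⁻¹ = 1 := by
    rw [← hSS, ← Matrix.mul_assoc, Matrix.nonsing_inv_mul S hdetU,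
      Matrix.one_mul, Matrix.mul_nonsing_inv S hdetU]
  have hcong1 : ∀ t : ℝ, (t • B - A).PosDef ↔ ∀ i, 0 < (-1 : ℝ) * μ i + t := by
    intro t
    rw [← posDef_conj_inv_iff hS (t • B - A)]
    have he : S⁻¹ * (t • B - A) * S⁻¹ = (-1 : ℝ) • C + t • (1 : Matrix (Fin n) (Fin n) ℂ) := by
      rw [Matrix.mul_sub, Matrix.sub_mul, Matrix.mul_smul, Matrix.smul_mul, hBid, ← hCdef,
        neg_one_smul, sub_eq_neg_add]
    rw [he, posDef_smul_add_smul_one_iff hT]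
  have hcong2 : ∀ t : ℝ, (t • A - B).PosDef ↔ ∀ i, 0 < t * μ i + (-1 : ℝ) := by
    intro t
    rw [← posDef_conj_inv_iff hS (t • A - B)]
    have he : S⁻¹ * (t • A - B) * S⁻¹ = t • C + (-1 : ℝ) • (1 : Matrix (Fin n) (Fin n) ℂ) := by
      rw [Matrix.mul_sub, Matrix.sub_mul, Matrix.mul_smul, Matrix.smul_mul, hBid, ← hCdef,
        neg_one_smul, sub_eq_add_neg]
    rw [he, posDef_smul_add_smul_one_iff hT]
  obtain ⟨i₁, hi₁⟩ := Finite.exists_max μ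
  obtain ⟨i₂, hi₂⟩ := Finite.exists_min μ
  have hM1 : Mmat A B = μ i₁ := by
    unfold Mmat
    have hset : {t : ℝ | 0 < t ∧ (t • B - A).PosDef} = Set.Ioi (μ i₁) := by
      ext t
      simp only [Set.mem_setOf_eq, hcong1 t, Set.mem_Ioi]
      constructor
      · rintro ⟨-, h⟩
        have := h i₁
        linarith
      · intro ht
        exact ⟨(hμpos i₁).trans ht, fun i => by have := hi₁ i; linarith⟩
    rw [hset, csInf_Ioi]
  have hM2 : Mmat B A = (μ i₂)⁻¹ := by
    unfold Mmat
    have hset : {t : ℝ | 0 < t ∧ (t • A - B).PosDef} = Set.Ioi ((μ i₂)⁻¹) := by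
      ext t
      simp only [Set.mem_setOf_eq, hcong2 t, Set.mem_Ioi]
      constructor
      · rintro ⟨ht0, h⟩
        have h2 := h i₂
        rw [← one_div, div_lt_iff₀ (hμpos i₂)]
        linarith
      · intro ht
        have ht0 : 0 < t := lt_trans (inv_pos.mpr (hμpos i₂)) ht
        refine ⟨ht0, fun i => ?_⟩
        have h1 : (μ i)⁻¹ ≤ (μ i₂)⁻¹ := inv_anti₀ (hμpos i₂) (hi₂ i)
        have h2 : (μ i)⁻¹ < t := lt_of_le_of_lt h1 ht
        nlinarith [mul_lt_mul_of_pos_right h2 (hμpos i), inv_mul_cancel₀ (hμpos i).ne']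
    rw [hset, csInf_Ioi]
  unfold dThompson
  rw [hM1, hM2]
  have hlogmax : Real.log (max (μ i₁) (μ i₂)⁻¹) =
      max (Real.log (μ i₁)) (-Real.log (μ i₂)) := by
    rw [← Real.log_inv]
    rcases le_total (μ i₁) ((μ i₂)⁻¹) with h | h
    · rw [max_eq_right h, max_eq_right ((Real.log_le_log_iff (hμpos i₁) (inv_pos.mpr (hμpos i₂))).mpr h)]
    · rw [max_eq_left h, max_eq_left ((Real.log_le_log_iff (inv_pos.mpr (hμpos i₂)) (hμpos i₁)).mpr h)]
  rw [hlogmax]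
  apply le_antisymm
  · apply max_le
    · exact le_trans (le_abs_self _)
        (le_ciSup (f := fun i => |Real.log (μ i)|) (Set.Finite.bddAbove (Set.finite_range _)) i₁)
    · exact le_trans (neg_le_abs _)
        (le_ciSup (f := fun i => |Real.log (μ i)|) (Set.Finite.bddAbove (Set.finite_range _)) i₂)
  · apply ciSup_le
    intro i
    refine abs_le.mpr ⟨?_, ?_⟩
    · have h1 : Real.log (μ i₂) ≤ Real.log (μ i) :=
        (Real.log_le_log_iff (hμpos i₂) (hμpos i)).mpr (hi₂ i)
      have h2 : -Real.log (μ i₂) ≤ max (Real.log (μ i₁)) (-Real.log (μ i₂)) :=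
        le_max_right _ _
      linarith
    · have h1 : Real.log (μ i) ≤ Real.log (μ i₁) :=
        (Real.log_le_log_iff (hμpos i) (hμpos i₁)).mpr (hi₁ i)
      have h2 : Real.log (μ i₁) ≤ max (Real.log (μ i₁)) (-Real.log (μ i₂)) := le_max_left _ _
      linarith
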